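/- arXiv:2503.18053 — 2 statements merged into one kernel-verified Lean document; each statement's English description precedes it below -/
import Mathlib

section
/- For any C⁴ function v on an open set Ω ⊆ ℝ² and with ε[v] := 𝔾⁻¹(cof(∇²v)) where 𝔾⁻¹σ = ((1-ν²)/E)σ - ((1+ν)ν/E)cof(σ), the identity curl Curl ε[v] = ((1-ν²)/E) Δ²v holds pointwise on Ω, where Δ² = ΔΔ is the bilaplacian. -/
open Matrix

noncomputable def pd1 (f : ℝ × ℝ → ℝ) (p : ℝ × ℝ) : ℝ := fderiv ℝ f p (1, 0)
noncomputable def pd2 (f : ℝ × ℝ → ℝ) (p : ℝ × ℝ) : ℝ := fderiv ℝ f p (0, 1)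

lemma pd1_contDiffOn {Ω : Set (ℝ × ℝ)} (hΩ : IsOpen Ω) {f : ℝ × ℝ → ℝ}
    {n m : WithTop ℕ∞} (hf : ContDiffOn ℝ n f Ω) (hm : m + 1 ≤ n) :
    ContDiffOn ℝ m (pd1 f) Ω :=
  (hf.fderiv_of_isOpen hΩ hm).clm_apply contDiffOn_const

lemma pd2_contDiffOn {Ω : Set (ℝ × ℝ)} (hΩ : IsOpen Ω) {f : ℝ × ℝ → ℝ}
    {n m : WithTop ℕ∞} (hf : ContDiffOn ℝ n f Ω) (hm : m + 1 ≤ n) :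
    ContDiffOn ℝ m (pd2 f) Ω :=
  (hf.fderiv_of_isOpen hΩ hm).clm_apply contDiffOn_const

lemma pd_comm {f : ℝ × ℝ → ℝ} {p : ℝ × ℝ} (hf : ContDiffAt ℝ 2 f p) :
    pd1 (pd2 f) p = pd2 (pd1 f) p := by
  have hdf : DifferentiableAt ℝ (fderiv ℝ f) p := by
    have h1 : ContDiffAt ℝ 1 (fderiv ℝ f) p := hf.fderiv_right (by norm_num)
    exact h1.differentiableAt (by norm_num)
  have key : ∀ w u : ℝ × ℝ, fderiv ℝ (fun q => fderiv ℝ f q w) p u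
      = fderiv ℝ (fderiv ℝ f) p u w := by
    intro w u
    have h := ((ContinuousLinearMap.apply ℝ ℝ w).hasFDerivAt (x := fderiv ℝ f p)).comp p
      hdf.hasFDerivAt
    have := h.fderiv
    calc fderiv ℝ (fun q => fderiv ℝ f q w) p u
        = fderiv ℝ ((ContinuousLinearMap.apply ℝ ℝ w) ∘ (fderiv ℝ f)) p u := rfl
      _ = fderiv ℝ (fderiv ℝ f) p u w := by rw [this]; rfl
  have hsym := hf.isSymmSndFDerivAt (by simp [minSmoothness_of_isRCLikeNormedField])
  show fderiv ℝ (fun q => fderiv ℝ f q (0,1)) p (1,0)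
      = fderiv ℝ (fun q => fderiv ℝ f q (1,0)) p (0,1)
  rw [key, key, hsym]

lemma pd_comb {g h : ℝ × ℝ → ℝ} {p : ℝ × ℝ} (a b : ℝ)
    (hg : DifferentiableAt ℝ g p) (hh : DifferentiableAt ℝ h p) (w : ℝ × ℝ) :
    fderiv ℝ (fun q => a * g q + b * h q) p w
      = a * fderiv ℝ g p w + b * fderiv ℝ h p w := by
  rw [fderiv_fun_add (hg.const_mul a) (hh.const_mul b), fderiv_const_mul hg a,
    fderiv_const_mul hh b]
  simp

lemma pd_comb4 {g1 g2 g3 g4 : ℝ × ℝ → ℝ} {p : ℝ × ℝ} (c1 c2 c3 c4 : ℝ)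
    (h1 : DifferentiableAt ℝ g1 p) (h2 : DifferentiableAt ℝ g2 p)
    (h3 : DifferentiableAt ℝ g3 p) (h4 : DifferentiableAt ℝ g4 p) (w : ℝ × ℝ) :
    fderiv ℝ (fun q => c1 * g1 q + c2 * g2 q + c3 * g3 q + c4 * g4 q) p w
      = c1 * fderiv ℝ g1 p w + c2 * fderiv ℝ g2 p w
        + c3 * fderiv ℝ g3 p w + c4 * fderiv ℝ g4 p w := by
  have d1 := h1.const_mul c1
  have d2 := h2.const_mul c2
  have d3 := h3.const_mul c3
  have d4 := h4.const_mul c4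
  rw [fderiv_fun_add ((d1.fun_add d2).fun_add d3) d4, fderiv_fun_add (d1.fun_add d2) d3, fderiv_fun_add d1 d2,
    fderiv_const_mul h1 c1, fderiv_const_mul h2 c2, fderiv_const_mul h3 c3,
    fderiv_const_mul h4 c4]
  simp

lemma pd_addl {g h : ℝ × ℝ → ℝ} {p : ℝ × ℝ}
    (hg : DifferentiableAt ℝ g p) (hh : DifferentiableAt ℝ h p) (w : ℝ × ℝ) :
    fderiv ℝ (fun q => g q + h q) p w = fderiv ℝ g p w + fderiv ℝ h p w := by
  rw [fderiv_fun_add hg hh]; simp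

lemma pd1_congr {F G : ℝ × ℝ → ℝ} {p : ℝ × ℝ} (h : F =ᶠ[nhds p] G) :
    pd1 F p = pd1 G p := by unfold pd1; rw [h.fderiv_eq]

lemma pd2_congr {F G : ℝ × ℝ → ℝ} {p : ℝ × ℝ} (h : F =ᶠ[nhds p] G) :
    pd2 F p = pd2 G p := by unfold pd2; rw [h.fderiv_eq]

def cof (M : Matrix (Fin 2) (Fin 2) ℝ) : Matrix (Fin 2) (Fin 2) ℝ :=
  !![M 1 1, -(M 1 0); -(M 0 1), M 0 0]

noncomputable def hess (v : ℝ × ℝ → ℝ) (p : ℝ × ℝ) : Matrix (Fin 2) (Fin 2) ℝ :=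
  !![pd1 (pd1 v) p, pd2 (pd1 v) p; pd1 (pd2 v) p, pd2 (pd2 v) p]

/-- The inverse constitutive law `ℂ⁻¹σ = ((1-ν²)/E)σ - ((1+ν)ν/E)cof(σ)`. -/
noncomputable def invLaw (E ν : ℝ) (σ : Matrix (Fin 2) (Fin 2) ℝ) :
    Matrix (Fin 2) (Fin 2) ℝ :=
  ((1 - ν ^ 2) / E) • σ - ((1 + ν) * ν / E) • cof σ

noncomputable def curlV (V : ℝ × ℝ → ℝ × ℝ) (p : ℝ × ℝ) : ℝ :=
  pd1 (fun q => (V q).2) p - pd2 (fun q => (V q).1) p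

noncomputable def CurlM (M : ℝ × ℝ → Matrix (Fin 2) (Fin 2) ℝ) (p : ℝ × ℝ) : ℝ × ℝ :=
  (curlV (fun q => (M q 0 0, M q 0 1)) p, curlV (fun q => (M q 1 0, M q 1 1)) p)

/-- Laplacian. -/
noncomputable def lap (v : ℝ × ℝ → ℝ) (p : ℝ × ℝ) : ℝ := pd1 (pd1 v) p + pd2 (pd2 v) p

/-- Bilaplacian. -/
noncomputable def bilap (v : ℝ × ℝ → ℝ) (p : ℝ × ℝ) : ℝ := lap (lap v) p

/-- For a C⁴ function `v` on an open set `Ω ⊆ ℝ²` and `ε[v] = ℂ⁻¹(cof(∇²v))`, one has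
`curl Curl ε[v] = ((1-ν²)/E) Δ²v` pointwise on `Ω`. -/
theorem curlCurl_airy_strain (E ν : ℝ) (hE : 0 < E) (hν₁ : -1 < ν) (hν₂ : ν < 1 / 2)
    (Ω : Set (ℝ × ℝ)) (hΩ : IsOpen Ω) (v : ℝ × ℝ → ℝ) (hv : ContDiffOn ℝ 4 v Ω) :
    ∀ p ∈ Ω,
      curlV (CurlM (fun q => invLaw E ν (cof (hess v q)))) p
        = ((1 - ν ^ 2) / E) * bilap v p := by
  intro p hp
  have hmem : Ω ∈ nhds p := hΩ.mem_nhds hp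
  -- smoothness bookkeeping
  have hC3a : ContDiffOn ℝ 3 (pd1 v) Ω := pd1_contDiffOn hΩ hv (by norm_num)
  have hC3b : ContDiffOn ℝ 3 (pd2 v) Ω := pd2_contDiffOn hΩ hv (by norm_num)
  have h11 : ContDiffOn ℝ 2 (pd1 (pd1 v)) Ω := pd1_contDiffOn hΩ hC3a (by norm_num)
  have h12 : ContDiffOn ℝ 2 (pd2 (pd1 v)) Ω := pd2_contDiffOn hΩ hC3a (by norm_num)
  have h21 : ContDiffOn ℝ 2 (pd1 (pd2 v)) Ω := pd1_contDiffOn hΩ hC3b (by norm_num)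
  have h22 : ContDiffOn ℝ 2 (pd2 (pd2 v)) Ω := pd2_contDiffOn hΩ hC3b (by norm_num)
  have dOf2 : ∀ {g : ℝ × ℝ → ℝ}, ContDiffOn ℝ 2 g Ω → ∀ q ∈ Ω,
      DifferentiableAt ℝ g q := fun hg q hq =>
    (hg.contDiffAt (hΩ.mem_nhds hq)).differentiableAt (by norm_num)
  have dpd1 : ∀ {g : ℝ × ℝ → ℝ}, ContDiffOn ℝ 2 g Ω → ∀ q ∈ Ω,
      DifferentiableAt ℝ (pd1 g) q := fun hg q hq =>
    ((pd1_contDiffOn (m := 1) hΩ hg (by norm_num)).contDiffAt (hΩ.mem_nhds hq)).differentiableAt (by norm_num)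
  have dpd2 : ∀ {g : ℝ × ℝ → ℝ}, ContDiffOn ℝ 2 g Ω → ∀ q ∈ Ω,
      DifferentiableAt ℝ (pd2 g) q := fun hg q hq =>
    ((pd2_contDiffOn (m := 1) hΩ hg (by norm_num)).contDiffAt (hΩ.mem_nhds hq)).differentiableAt (by norm_num)
  -- symmetry of second derivatives, on Ω
  have S0 : ∀ q ∈ Ω, pd1 (pd2 v) q = pd2 (pd1 v) q := fun q hq =>
    pd_comm ((hv.contDiffAt (hΩ.mem_nhds hq)).of_le (by norm_num))
  have S2 : ∀ q ∈ Ω, pd1 (pd2 (pd2 v)) q = pd2 (pd1 (pd2 v)) q := fun q hq =>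
    pd_comm ((hC3b.contDiffAt (hΩ.mem_nhds hq)).of_le (by norm_num))
  have S3 : ∀ q ∈ Ω, pd1 (pd2 (pd1 v)) q = pd2 (pd1 (pd1 v)) q := fun q hq =>
    pd_comm ((hC3a.contDiffAt (hΩ.mem_nhds hq)).of_le (by norm_num))
  have S1 : ∀ q ∈ Ω, pd2 (pd2 (pd1 v)) q = pd1 (pd2 (pd2 v)) q := by
    intro q hq
    have h : pd2 (pd2 (pd1 v)) q = pd2 (pd1 (pd2 v)) q :=
      pd2_congr (Filter.eventuallyEq_of_mem (hΩ.mem_nhds hq) fun r hr => (S0 r hr).symm)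
    rw [h]; exact (S2 q hq).symm
  have S4 : ∀ q ∈ Ω, pd1 (pd1 (pd2 v)) q = pd2 (pd1 (pd1 v)) q := by
    intro q hq
    have h : pd1 (pd1 (pd2 v)) q = pd1 (pd2 (pd1 v)) q :=
      pd1_congr (Filter.eventuallyEq_of_mem (hΩ.mem_nhds hq) S0)
    rw [h]; exact S3 q hq
  -- the matrix entries
  have hN00 : (fun r => invLaw E ν (cof (hess v r)) 0 0)
      = fun r => ((1 - ν ^ 2) / E) * pd2 (pd2 v) r
          + (-((1 + ν) * ν / E)) * pd1 (pd1 v) r := by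
    funext r; simp [invLaw, cof, hess, Matrix.sub_apply, Matrix.smul_apply]; ring
  have hN01 : (fun r => invLaw E ν (cof (hess v r)) 0 1)
      = fun r => (-((1 - ν ^ 2) / E)) * pd1 (pd2 v) r
          + (-((1 + ν) * ν / E)) * pd2 (pd1 v) r := by
    funext r; simp [invLaw, cof, hess, Matrix.sub_apply, Matrix.smul_apply]; ring
  have hN10 : (fun r => invLaw E ν (cof (hess v r)) 1 0)
      = fun r => (-((1 - ν ^ 2) / E)) * pd2 (pd1 v) r
          + (-((1 + ν) * ν / E)) * pd1 (pd2 v) r := by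
    funext r; simp [invLaw, cof, hess, Matrix.sub_apply, Matrix.smul_apply]; ring
  have hN11 : (fun r => invLaw E ν (cof (hess v r)) 1 1)
      = fun r => ((1 - ν ^ 2) / E) * pd1 (pd1 v) r
          + (-((1 + ν) * ν / E)) * pd2 (pd2 v) r := by
    funext r; simp [invLaw, cof, hess, Matrix.sub_apply, Matrix.smul_apply]; ring
  simp only [curlV, CurlM]
  rw [hN00, hN01, hN10, hN11]
  -- row 1 reduction
  have hrow1 : (fun q => pd1 (fun r => ((1 - ν ^ 2) / E) * pd1 (pd1 v) r
          + (-((1 + ν) * ν / E)) * pd2 (pd2 v) r) q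
        - pd2 (fun r => (-((1 - ν ^ 2) / E)) * pd2 (pd1 v) r
          + (-((1 + ν) * ν / E)) * pd1 (pd2 v) r) q)
      =ᶠ[nhds p] (fun q => ((1 - ν ^ 2) / E) * pd1 (pd1 (pd1 v)) q
          + (-((1 + ν) * ν / E)) * pd1 (pd2 (pd2 v)) q
          + ((1 - ν ^ 2) / E) * pd2 (pd2 (pd1 v)) q
          + ((1 + ν) * ν / E) * pd2 (pd1 (pd2 v)) q) := by
    filter_upwards [hmem] with q hq
    rw [show pd1 (fun r => ((1 - ν ^ 2) / E) * pd1 (pd1 v) r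
          + (-((1 + ν) * ν / E)) * pd2 (pd2 v) r) q
        = ((1 - ν ^ 2) / E) * pd1 (pd1 (pd1 v)) q
          + (-((1 + ν) * ν / E)) * pd1 (pd2 (pd2 v)) q from
      pd_comb _ _ (dOf2 h11 q hq) (dOf2 h22 q hq) (1, 0)]
    rw [show pd2 (fun r => (-((1 - ν ^ 2) / E)) * pd2 (pd1 v) r
          + (-((1 + ν) * ν / E)) * pd1 (pd2 v) r) q
        = (-((1 - ν ^ 2) / E)) * pd2 (pd2 (pd1 v)) q
          + (-((1 + ν) * ν / E)) * pd2 (pd1 (pd2 v)) q from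
      pd_comb _ _ (dOf2 h12 q hq) (dOf2 h21 q hq) (0, 1)]
    ring
  -- row 0 reduction
  have hrow0 : (fun q => pd1 (fun r => (-((1 - ν ^ 2) / E)) * pd1 (pd2 v) r
          + (-((1 + ν) * ν / E)) * pd2 (pd1 v) r) q
        - pd2 (fun r => ((1 - ν ^ 2) / E) * pd2 (pd2 v) r
          + (-((1 + ν) * ν / E)) * pd1 (pd1 v) r) q)
      =ᶠ[nhds p] (fun q => (-((1 - ν ^ 2) / E)) * pd1 (pd1 (pd2 v)) q
          + (-((1 + ν) * ν / E)) * pd1 (pd2 (pd1 v)) q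
          + (-((1 - ν ^ 2) / E)) * pd2 (pd2 (pd2 v)) q
          + ((1 + ν) * ν / E) * pd2 (pd1 (pd1 v)) q) := by
    filter_upwards [hmem] with q hq
    rw [show pd1 (fun r => (-((1 - ν ^ 2) / E)) * pd1 (pd2 v) r
          + (-((1 + ν) * ν / E)) * pd2 (pd1 v) r) q
        = (-((1 - ν ^ 2) / E)) * pd1 (pd1 (pd2 v)) q
          + (-((1 + ν) * ν / E)) * pd1 (pd2 (pd1 v)) q from
      pd_comb _ _ (dOf2 h21 q hq) (dOf2 h12 q hq) (1, 0)]
    rw [show pd2 (fun r => ((1 - ν ^ 2) / E) * pd2 (pd2 v) r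
          + (-((1 + ν) * ν / E)) * pd1 (pd1 v) r) q
        = ((1 - ν ^ 2) / E) * pd2 (pd2 (pd2 v)) q
          + (-((1 + ν) * ν / E)) * pd2 (pd1 (pd1 v)) q from
      pd_comb _ _ (dOf2 h22 q hq) (dOf2 h11 q hq) (0, 1)]
    ring
  rw [pd1_congr hrow1, pd2_congr hrow0]
  -- expand the fourth-order derivatives
  rw [show pd1 (fun q => ((1 - ν ^ 2) / E) * pd1 (pd1 (pd1 v)) q
        + (-((1 + ν) * ν / E)) * pd1 (pd2 (pd2 v)) q
        + ((1 - ν ^ 2) / E) * pd2 (pd2 (pd1 v)) q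
        + ((1 + ν) * ν / E) * pd2 (pd1 (pd2 v)) q) p
      = ((1 - ν ^ 2) / E) * pd1 (pd1 (pd1 (pd1 v))) p
        + (-((1 + ν) * ν / E)) * pd1 (pd1 (pd2 (pd2 v))) p
        + ((1 - ν ^ 2) / E) * pd1 (pd2 (pd2 (pd1 v))) p
        + ((1 + ν) * ν / E) * pd1 (pd2 (pd1 (pd2 v))) p from
    pd_comb4 _ _ _ _ (dpd1 h11 p hp) (dpd1 h22 p hp) (dpd2 h12 p hp)
      (dpd2 h21 p hp) (1, 0)]
  rw [show pd2 (fun q => (-((1 - ν ^ 2) / E)) * pd1 (pd1 (pd2 v)) q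
        + (-((1 + ν) * ν / E)) * pd1 (pd2 (pd1 v)) q
        + (-((1 - ν ^ 2) / E)) * pd2 (pd2 (pd2 v)) q
        + ((1 + ν) * ν / E) * pd2 (pd1 (pd1 v)) q) p
      = (-((1 - ν ^ 2) / E)) * pd2 (pd1 (pd1 (pd2 v))) p
        + (-((1 + ν) * ν / E)) * pd2 (pd1 (pd2 (pd1 v))) p
        + (-((1 - ν ^ 2) / E)) * pd2 (pd2 (pd2 (pd2 v))) p
        + ((1 + ν) * ν / E) * pd2 (pd2 (pd1 (pd1 v))) p from
    pd_comb4 _ _ _ _ (dpd1 h21 p hp) (dpd1 h12 p hp) (dpd2 h22 p hp)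
      (dpd2 h11 p hp) (0, 1)]
  -- swap mixed fourth-order partials
  have swA : pd1 (pd2 (pd2 (pd1 v))) p = pd1 (pd1 (pd2 (pd2 v))) p :=
    pd1_congr (Filter.eventuallyEq_of_mem hmem S1)
  have swB : pd1 (pd2 (pd1 (pd2 v))) p = pd1 (pd1 (pd2 (pd2 v))) p :=
    pd1_congr (Filter.eventuallyEq_of_mem hmem fun r hr => (S2 r hr).symm)
  have swC : pd2 (pd1 (pd2 (pd1 v))) p = pd2 (pd2 (pd1 (pd1 v))) p :=
    pd2_congr (Filter.eventuallyEq_of_mem hmem S3)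
  have swD : pd2 (pd1 (pd1 (pd2 v))) p = pd2 (pd2 (pd1 (pd1 v))) p :=
    pd2_congr (Filter.eventuallyEq_of_mem hmem S4)
  rw [swA, swB, swC, swD]
  -- right-hand side
  have hlapf : pd1 (fun r => pd1 (pd1 v) r + pd2 (pd2 v) r)
      =ᶠ[nhds p] (fun q => pd1 (pd1 (pd1 v)) q + pd1 (pd2 (pd2 v)) q) := by
    filter_upwards [hmem] with q hq
    exact pd_addl (dOf2 h11 q hq) (dOf2 h22 q hq) (1, 0)
  have hlapg : pd2 (fun r => pd1 (pd1 v) r + pd2 (pd2 v) r)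
      =ᶠ[nhds p] (fun q => pd2 (pd1 (pd1 v)) q + pd2 (pd2 (pd2 v)) q) := by
    filter_upwards [hmem] with q hq
    exact pd_addl (dOf2 h11 q hq) (dOf2 h22 q hq) (0, 1)
  have hR : bilap v p
      = pd1 (pd1 (pd1 (pd1 v))) p + pd1 (pd1 (pd2 (pd2 v))) p
        + pd2 (pd2 (pd1 (pd1 v))) p + pd2 (pd2 (pd2 (pd2 v))) p := by
    have hl : lap v = fun q => pd1 (pd1 v) q + pd2 (pd2 v) q := rfl
    show pd1 (pd1 (lap v)) p + pd2 (pd2 (lap v)) p = _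
    rw [hl, pd1_congr hlapf, pd2_congr hlapg]
    rw [show pd1 (fun q => pd1 (pd1 (pd1 v)) q + pd1 (pd2 (pd2 v)) q) p
        = pd1 (pd1 (pd1 (pd1 v))) p + pd1 (pd1 (pd2 (pd2 v))) p from
      pd_addl (dpd1 h11 p hp) (dpd1 h22 p hp) (1, 0)]
    rw [show pd2 (fun q => pd2 (pd1 (pd1 v)) q + pd2 (pd2 (pd2 v)) q) p
        = pd2 (pd2 (pd1 (pd1 v))) p + pd2 (pd2 (pd2 (pd2 v))) p from
      pd_addl (dpd2 h11 p hp) (dpd2 h22 p hp) (0, 1)]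
    ring
  rw [hR]
  ring
end

section
/- For each fixed unit vector e ∈ ℝ² and the vector field v_D(x) := (E/(1-ν²)) (x/(8π)) (log|x|² + 1) (x ≠ 0, v_D(0) = 0), the scalar function e × v_D := e₁ (v_D)₂ - e₂ (v_D)₁ is biharmonic on ℝ² \ {0}: Δ²(e × v_D) = 0 pointwise away from the origin. -/
/-- The dislocation Airy potential `v_D(x) = (E/(1-ν²)) (x/(8π)) (log|x|² + 1)`, with
`v_D(0) = 0`. -/
noncomputable def vD (E ν : ℝ) (x : ℝ × ℝ) : ℝ × ℝ :=
  if x = 0 then 0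
  else ((E / (1 - ν ^ 2)) / (8 * Real.pi) * (Real.log (x.1 ^ 2 + x.2 ^ 2) + 1)) • x

namespace Bih

noncomputable def rr (p : ℝ × ℝ) : ℝ := p.1 ^ 2 + p.2 ^ 2

lemma rr_pos {p : ℝ × ℝ} (hp : p ≠ 0) : 0 < rr p := by
  rcases (by simpa [Prod.ext_iff] using hp : ¬(p.1 = 0 ∧ p.2 = 0)) with h
  rcases eq_or_ne p.1 0 with h1 | h1
  · have h2 : p.2 ≠ 0 := fun h2 => h ⟨h1, h2⟩
    have := pow_pos (abs_pos.mpr h2) 2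
    unfold rr; positivity
  · have := pow_pos (abs_pos.mpr h1) 2
    unfold rr; positivity

lemma rr_ne {p : ℝ × ℝ} (hp : p ≠ 0) : rr p ≠ 0 := (rr_pos hp).ne'

lemma hasFDerivAt_rr (p : ℝ × ℝ) :
    HasFDerivAt rr ((2 * p.1) • ContinuousLinearMap.fst ℝ ℝ ℝ
      + (2 * p.2) • ContinuousLinearMap.snd ℝ ℝ ℝ) p := by
  have h := ((hasFDerivAt_fst (𝕜 := ℝ) (p := p)).mul (hasFDerivAt_fst)).add
    ((hasFDerivAt_snd (𝕜 := ℝ) (p := p)).mul (hasFDerivAt_snd))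
  have he : rr = fun p : ℝ × ℝ => p.1 * p.1 + p.2 * p.2 := funext fun p => by
    simp [rr]; ring
  rw [he]
  refine h.congr_fderiv ?_
  ext v <;> simp <;> ring

/-- derivative of `p ↦ (rr p)⁻¹`. -/
lemma hasFDerivAt_rrinv {p : ℝ × ℝ} (hp : p ≠ 0) :
    HasFDerivAt (fun q => (rr q)⁻¹)
      ((-(rr p ^ 2)⁻¹) • ((2 * p.1) • ContinuousLinearMap.fst ℝ ℝ ℝ
        + (2 * p.2) • ContinuousLinearMap.snd ℝ ℝ ℝ)) p :=
  (hasDerivAt_inv (rr_ne hp)).comp_hasFDerivAt p (hasFDerivAt_rr p)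

lemma hasFDerivAt_log_rr {p : ℝ × ℝ} (hp : p ≠ 0) :
    HasFDerivAt (fun q => Real.log (rr q))
      ((rr p)⁻¹ • ((2 * p.1) • ContinuousLinearMap.fst ℝ ℝ ℝ
        + (2 * p.2) • ContinuousLinearMap.snd ℝ ℝ ℝ)) p :=
  (hasFDerivAt_rr p).log (rr_ne hp)

variable (a b C : ℝ)

noncomputable def FF (p : ℝ × ℝ) : ℝ := C * ((Real.log (rr p) + 1) * (a * p.1 + b * p.2))
noncomputable def F1 (p : ℝ × ℝ) : ℝ :=
  C * (2 * p.1 * (rr p)⁻¹ * (a * p.1 + b * p.2) + (Real.log (rr p) + 1) * a)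
noncomputable def F2 (p : ℝ × ℝ) : ℝ :=
  C * (2 * p.2 * (rr p)⁻¹ * (a * p.1 + b * p.2) + (Real.log (rr p) + 1) * b)
noncomputable def HH (p : ℝ × ℝ) : ℝ := 4 * C * (a * p.1 + b * p.2) * (rr p)⁻¹
noncomputable def H1 (p : ℝ × ℝ) : ℝ :=
  4 * C * a * (rr p)⁻¹ + 4 * C * (a * p.1 + b * p.2) * (-(rr p ^ 2)⁻¹ * (2 * p.1))
noncomputable def H2 (p : ℝ × ℝ) : ℝ :=
  4 * C * b * (rr p)⁻¹ + 4 * C * (a * p.1 + b * p.2) * (-(rr p ^ 2)⁻¹ * (2 * p.2))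

lemma lin_hasFDerivAt (p : ℝ × ℝ) :
    HasFDerivAt (fun q : ℝ × ℝ => a * q.1 + b * q.2)
      (a • ContinuousLinearMap.fst ℝ ℝ ℝ + b • ContinuousLinearMap.snd ℝ ℝ ℝ) p := by
  have h := ((hasFDerivAt_fst (𝕜 := ℝ) (p := p)).const_mul a).add
    ((hasFDerivAt_snd (𝕜 := ℝ) (p := p)).const_mul b)
  exact h

lemma hasFDerivAt_FF {p : ℝ × ℝ} (hp : p ≠ 0) :
    HasFDerivAt (FF a b C)
      (C • ((Real.log (rr p) + 1) •
          (a • ContinuousLinearMap.fst ℝ ℝ ℝ + b • ContinuousLinearMap.snd ℝ ℝ ℝ)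
        + (a * p.1 + b * p.2) •
          ((rr p)⁻¹ • ((2 * p.1) • ContinuousLinearMap.fst ℝ ℝ ℝ
            + (2 * p.2) • ContinuousLinearMap.snd ℝ ℝ ℝ)))) p :=
  ((((hasFDerivAt_log_rr hp).add_const 1).mul (lin_hasFDerivAt a b p)).const_mul C)

lemma pd1_FF {p : ℝ × ℝ} (hp : p ≠ 0) : pd1 (FF a b C) p = F1 a b C p := by
  rw [pd1, (hasFDerivAt_FF a b C hp).fderiv]
  simp [F1]
  try ring

lemma pd2_FF {p : ℝ × ℝ} (hp : p ≠ 0) : pd2 (FF a b C) p = F2 a b C p := by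
  rw [pd2, (hasFDerivAt_FF a b C hp).fderiv]
  simp [F2]
  try ring

lemma pd_F_sum {p : ℝ × ℝ} (hp : p ≠ 0) :
    pd1 (F1 a b C) p + pd2 (F2 a b C) p = HH a b C p := by
  have hlin := lin_hasFDerivAt a b p
  have hinv := hasFDerivAt_rrinv hp
  have h1 : HasFDerivAt (F1 a b C) _ p :=
    ((((hasFDerivAt_fst (𝕜 := ℝ) (p := p)).const_mul 2).mul hinv).mul hlin).add
      (((hasFDerivAt_log_rr hp).add_const 1).mul_const a) |>.const_mul C
  have h2 : HasFDerivAt (F2 a b C) _ p :=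
    ((((hasFDerivAt_snd (𝕜 := ℝ) (p := p)).const_mul 2).mul hinv).mul hlin).add
      (((hasFDerivAt_log_rr hp).add_const 1).mul_const b) |>.const_mul C
  rw [pd1, h1.fderiv, pd2, h2.fderiv]
  have hr : p.1 ^ 2 + p.2 ^ 2 ≠ 0 := rr_ne hp
  simp [HH, rr]
  field_simp
  ring

lemma pd1_HH {p : ℝ × ℝ} (hp : p ≠ 0) : pd1 (HH a b C) p = H1 a b C p := by
  have h : HasFDerivAt (HH a b C) _ p :=
    (((lin_hasFDerivAt a b p).const_mul (4 * C)).mul (hasFDerivAt_rrinv hp))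
  rw [pd1, h.fderiv]
  simp [H1]
  try ring

lemma pd2_HH {p : ℝ × ℝ} (hp : p ≠ 0) : pd2 (HH a b C) p = H2 a b C p := by
  have h : HasFDerivAt (HH a b C) _ p :=
    (((lin_hasFDerivAt a b p).const_mul (4 * C)).mul (hasFDerivAt_rrinv hp))
  rw [pd2, h.fderiv]
  simp [H2]
  try ring

lemma pd_H_sum {p : ℝ × ℝ} (hp : p ≠ 0) :
    pd1 (H1 a b C) p + pd2 (H2 a b C) p = 0 := by
  have hlin := lin_hasFDerivAt a b p
  have hinv := hasFDerivAt_rrinv hp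
  have hinv2 : HasFDerivAt (fun q => -(rr q ^ 2)⁻¹) _ p :=
    (((hasDerivAt_pow 2 (rr p)).inv (pow_ne_zero 2 (rr_ne hp))).neg).comp_hasFDerivAt p
      (hasFDerivAt_rr p)
  have h1 : HasFDerivAt (H1 a b C) _ p :=
    (hinv.const_mul (4 * C * a)).add
      (((hlin.const_mul (4 * C)).mul
        (hinv2.mul ((hasFDerivAt_fst (𝕜 := ℝ) (p := p)).const_mul 2))))
  have h2 : HasFDerivAt (H2 a b C) _ p :=
    (hinv.const_mul (4 * C * b)).add
      (((hlin.const_mul (4 * C)).mul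
        (hinv2.mul ((hasFDerivAt_snd (𝕜 := ℝ) (p := p)).const_mul 2))))
  rw [pd1, h1.fderiv, pd2, h2.fderiv]
  have hr : p.1 ^ 2 + p.2 ^ 2 ≠ 0 := rr_ne hp
  simp [rr]
  field_simp
  ring

lemma pd1_congr {f g : ℝ × ℝ → ℝ} {x : ℝ × ℝ} (h : f =ᶠ[nhds x] g) :
    pd1 f x = pd1 g x := by rw [pd1, pd1, h.fderiv_eq]

lemma pd2_congr {f g : ℝ × ℝ → ℝ} {x : ℝ × ℝ} (h : f =ᶠ[nhds x] g) :
    pd2 f x = pd2 g x := by rw [pd2, pd2, h.fderiv_eq]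

lemma lap_FF {p : ℝ × ℝ} (hp : p ≠ 0) : lap (FF a b C) p = HH a b C p := by
  have h1 : pd1 (FF a b C) =ᶠ[nhds p] F1 a b C :=
    (eventually_ne_nhds hp).mono fun q hq => pd1_FF a b C hq
  have h2 : pd2 (FF a b C) =ᶠ[nhds p] F2 a b C :=
    (eventually_ne_nhds hp).mono fun q hq => pd2_FF a b C hq
  rw [lap, pd1_congr h1, pd2_congr h2, pd_F_sum a b C hp]

lemma bilap_FF {p : ℝ × ℝ} (hp : p ≠ 0) : bilap (FF a b C) p = 0 := by
  have hH : lap (FF a b C) =ᶠ[nhds p] HH a b C :=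
    (eventually_ne_nhds hp).mono fun q hq => lap_FF a b C hq
  have h1 : pd1 (lap (FF a b C)) =ᶠ[nhds p] H1 a b C :=
    (eventually_ne_nhds hp).mono fun q hq => by
      rw [pd1_congr ((eventually_ne_nhds hq).mono fun z hz => lap_FF a b C hz),
        pd1_HH a b C hq]
  have h2 : pd2 (lap (FF a b C)) =ᶠ[nhds p] H2 a b C :=
    (eventually_ne_nhds hp).mono fun q hq => by
      rw [pd2_congr ((eventually_ne_nhds hq).mono fun z hz => lap_FF a b C hz),
        pd2_HH a b C hq]
  rw [bilap, lap, pd1_congr h1, pd2_congr h2, pd_H_sum a b C hp]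

end Bih

/-- For a unit vector `e ∈ ℝ²`, the scalar function `e × v_D = e₁(v_D)₂ - e₂(v_D)₁`
is biharmonic on `ℝ² \ {0}`. -/
theorem cross_vD_biharmonic_away_from_origin (E ν : ℝ) (hE : 0 < E)
    (hν₁ : -1 < ν) (hν₂ : ν < 1 / 2) (e : ℝ × ℝ) (he : e.1 ^ 2 + e.2 ^ 2 = 1) :
    ∀ x : ℝ × ℝ, x ≠ 0 →
      bilap (fun y => e.1 * (vD E ν y).2 - e.2 * (vD E ν y).1) x = 0 := by
  intro x hx
  set C := (E / (1 - ν ^ 2)) / (8 * Real.pi) with hC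
  have hfun : (fun y => e.1 * (vD E ν y).2 - e.2 * (vD E ν y).1)
      = Bih.FF (-e.2) e.1 C := by
    funext y
    by_cases hy : y = 0
    · simp [hy, vD, Bih.FF, Bih.rr, Real.log_zero]
    · simp [vD, hy, Bih.FF, Bih.rr, hC]
      ring
  rw [hfun]
  exact Bih.bilap_FF (-e.2) e.1 C hx
end
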